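/- A diagonal univariate polynomial matrix D = diag(d₁,…,d_m) is positive semidefinite at every x ∈ [a,b] (with a < b) if and only if there exist diagonal polynomial matrices A₁, A₂, A₃, A₄ ∈ ℝ[x]^{m×m} such that D(x) = (x−a)·A₁(x)ᵀA₁(x) + (b−x)·A₂(x)ᵀA₂(x) + A₃(x)ᵀA₃(x) + (b−x)(x−a)·A₄(x)ᵀA₄(x). -/

import Mathlib

open Matrix Polynomial


lemma closure_nonneg (Q : Polynomial ℝ) (u v r : ℝ) (huv : u < v)
    (hr : r ∈ Set.Icc u v) (h : ∀ s ∈ Set.Ioo u v, 0 ≤ Q.eval s) : 0 ≤ Q.eval r := by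
  have hclosed : IsClosed {x : ℝ | 0 ≤ Q.eval x} :=
    isClosed_le continuous_const Q.continuous
  have hsub : Set.Icc u v ⊆ {x : ℝ | 0 ≤ Q.eval x} := by
    rw [← closure_Ioo huv.ne]
    exact hclosed.closure_subset_iff.mpr h
  exact hsub hr

lemma S_mul (f g u v : Polynomial ℝ) :
    (f^2 + X*g^2) * (u^2 + X*v^2) = (f*u + X*(g*v))^2 + X*(f*v - g*u)^2 := by ring

lemma halfline_rep : ∀ n (Q : Polynomial ℝ), Q.natDegree ≤ n →
    (∀ s : ℝ, 0 ≤ s → 0 ≤ Q.eval s) → ∃ f g : Polynomial ℝ, Q = f^2 + X*g^2 := by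
  intro n
  induction n using Nat.strong_induction_on with
  | _ n IH =>
    intro Q hdeg hQ
    by_cases h0 : Q.natDegree = 0
    · obtain ⟨c, rfl⟩ := Polynomial.natDegree_eq_zero.mp h0
      have hc : 0 ≤ c := by simpa using hQ 0 le_rfl
      refine ⟨C (Real.sqrt c), 0, ?_⟩
      rw [← C_pow, Real.sq_sqrt hc]; ring
    · have hdQ : 1 ≤ Q.natDegree := Nat.one_le_iff_ne_zero.mpr h0
      have hQne : Q ≠ 0 := fun h => h0 (by simp [h])
      have hnu : ¬ IsUnit Q := fun hu => h0 (Polynomial.natDegree_eq_zero_of_isUnit hu)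
      obtain ⟨p, hpirr, hpdvd⟩ := WfDvdMonoid.exists_irreducible_factor hnu hQne
      have hpne : p ≠ 0 := hpirr.ne_zero
      have hple2 : p.natDegree ≤ 2 := hpirr.natDegree_le_two
      have hpge1 : 1 ≤ p.natDegree := by
        rcases Nat.eq_zero_or_pos p.natDegree with h | h
        · obtain ⟨c, rfl⟩ := Polynomial.natDegree_eq_zero.mp h
          have hc : c ≠ 0 := fun hc => hpne (by simp [hc])
          exact absurd (Polynomial.isUnit_C.mpr hc.isUnit) hpirr.not_isUnit
        · exact h
      rcases (show p.natDegree = 1 ∨ p.natDegree = 2 by omega) with hp1 | hp2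
      · -- linear factor: Q has a real root r
        obtain ⟨a0, ha0, b0, hab0⟩ := Polynomial.natDegree_eq_one.mp hp1
        set r : ℝ := -b0 / a0 with hrdef
        have hproot : p.eval r = 0 := by
          rw [← hab0]
          simp only [Polynomial.eval_add, Polynomial.eval_mul, Polynomial.eval_C,
            Polynomial.eval_X, hrdef]
          field_simp
          ring
        have hQroot : Q.IsRoot r := by
          have := Polynomial.eval_dvd (x := r) hpdvd
          rw [hproot] at this
          exact zero_dvd_iff.mp this
        obtain ⟨Q1, hQ1⟩ := Polynomial.dvd_iff_isRoot.mpr hQroot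
        have hQ1ne : Q1 ≠ 0 := by rintro rfl; rw [mul_zero] at hQ1; exact hQne hQ1
        have hdeg1 : Q.natDegree = 1 + Q1.natDegree := by
          rw [hQ1, Polynomial.natDegree_mul (Polynomial.X_sub_C_ne_zero r) hQ1ne,
            Polynomial.natDegree_X_sub_C]
        have heval : ∀ s : ℝ, Q.eval s = (s - r) * Q1.eval s := by
          intro s; rw [hQ1]; simp
        rcases le_or_gt r 0 with hr | hr
        · -- r ≤ 0
          have hpos : ∀ s : ℝ, 0 < s → 0 ≤ Q1.eval s := by
            intro s hs
            have h2 := hQ s hs.le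
            rw [heval s] at h2
            exact (mul_nonneg_iff_of_pos_left (by linarith : (0:ℝ) < s - r)).mp h2
          have hnn : ∀ s : ℝ, 0 ≤ s → 0 ≤ Q1.eval s := by
            intro s hs
            rcases eq_or_lt_of_le hs with h | h
            · rw [← h]
              exact closure_nonneg Q1 0 1 0 one_pos ⟨le_rfl, zero_le_one⟩
                (fun t ht => hpos t ht.1)
            · exact hpos s h
          obtain ⟨f1, g1, hrep⟩ := IH (n-1) (by omega) Q1 (by omega) hnn
          have hfac : (X - C r : Polynomial ℝ) =
              (C (Real.sqrt (-r)))^2 + X*(1:Polynomial ℝ)^2 := by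
            rw [← Polynomial.C_pow, Real.sq_sqrt (by linarith : (0:ℝ) ≤ -r), map_neg]
            ring
          refine ⟨f1 * C (Real.sqrt (-r)) + X*(g1*1), f1*1 - g1 * C (Real.sqrt (-r)), ?_⟩
          rw [hQ1, hrep, hfac]; ring
        · -- r > 0 : even multiplicity
          have e1 : ∀ s : ℝ, r < s → 0 ≤ Q1.eval s := by
            intro s hs
            have h2 := hQ s (by linarith)
            rw [heval s] at h2
            exact (mul_nonneg_iff_of_pos_left (by linarith : (0:ℝ) < s - r)).mp h2
          have hge : 0 ≤ Q1.eval r :=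
            closure_nonneg Q1 r (r+1) r (by linarith) ⟨le_rfl, by linarith⟩
              (fun t ht => e1 t ht.1)
          have hle : Q1.eval r ≤ 0 := by
            have := closure_nonneg (-Q1) 0 r r hr ⟨hr.le, le_rfl⟩ (by
              intro t ht
              have h2 := hQ t ht.1.le
              rw [heval t] at h2
              simp only [Polynomial.eval_neg]
              nlinarith [ht.2])
            simpa using this
          obtain ⟨Q2, hQ2⟩ := Polynomial.dvd_iff_isRoot.mpr (le_antisymm hle hge)
          have hQ2ne : Q2 ≠ 0 := by rintro rfl; rw [mul_zero] at hQ2; exact hQ1ne hQ2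
          have hdeg2 : Q1.natDegree = 1 + Q2.natDegree := by
            rw [hQ2, Polynomial.natDegree_mul (Polynomial.X_sub_C_ne_zero r) hQ2ne,
              Polynomial.natDegree_X_sub_C]
          have heval2 : ∀ s : ℝ, Q.eval s = (s-r)^2 * Q2.eval s := by
            intro s; rw [hQ1, hQ2]; simp; ring
          have hnn2 : ∀ s : ℝ, 0 ≤ s → 0 ≤ Q2.eval s := by
            intro s hs
            rcases eq_or_ne s r with heq | hne
            · rw [heq]
              exact closure_nonneg Q2 r (r+1) r (by linarith) ⟨le_rfl, by linarith⟩ (by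
                intro t ht
                have h2 := hQ t (by linarith [ht.1])
                rw [heval2 t] at h2
                exact (mul_nonneg_iff_of_pos_left
                  (by nlinarith [ht.1] : (0:ℝ) < (t-r)^2)).mp h2)
            · have h2 := hQ s hs
              rw [heval2 s] at h2
              have hsr : s - r ≠ 0 := sub_ne_zero.mpr hne
              exact (mul_nonneg_iff_of_pos_left (by positivity : (0:ℝ) < (s-r)^2)).mp h2
          obtain ⟨f2, g2, hrep⟩ := IH (n-2) (by omega) Q2 (by omega) hnn2
          refine ⟨(X - C r) * f2, (X - C r) * g2, ?_⟩
          rw [hQ1, hQ2, hrep]; ring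
      · -- irreducible quadratic factor
        have hc : p.leadingCoeff ≠ 0 := Polynomial.leadingCoeff_ne_zero.mpr hpne
        set q : Polynomial ℝ := p * C (p.leadingCoeff)⁻¹ with hqdef
        have hqne : q ≠ 0 := mul_ne_zero hpne (by simpa using inv_ne_zero hc)
        have hmon : q.Monic := Polynomial.monic_mul_leadingCoeff_inv hpne
        have hqdeg : q.natDegree = 2 := by
          rw [hqdef, Polynomial.natDegree_mul hpne (by simpa using inv_ne_zero hc),
            Polynomial.natDegree_C]
          omega
        obtain ⟨w0, hw0⟩ := hpdvd
        have hqdvd : q ∣ Q := ⟨C p.leadingCoeff * w0, by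
          rw [hw0, hqdef]
          rw [mul_assoc, ← mul_assoc (C (p.leadingCoeff)⁻¹), ← Polynomial.C_mul,
            inv_mul_cancel₀ hc]
          simp⟩
        have hqnoroot : ∀ x : ℝ, q.eval x ≠ 0 := by
          intro x hroot
          have hproot : p.IsRoot x := by
            have hx : q.eval x = p.eval x * (p.leadingCoeff)⁻¹ := by simp [hqdef]
            rw [hx] at hroot
            rcases mul_eq_zero.mp hroot with h | h
            · exact h
            · exact absurd h (inv_ne_zero hc)
          obtain ⟨w, hw⟩ := Polynomial.dvd_iff_isRoot.mpr hproot
          rcases hpirr.isUnit_or_isUnit hw with hu | hu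
          · exact Polynomial.not_isUnit_X_sub_C x hu
          · have hw0' : w.natDegree = 0 := Polynomial.natDegree_eq_zero_of_isUnit hu
            have : p.natDegree = 1 := by
              rw [hw, Polynomial.natDegree_mul (Polynomial.X_sub_C_ne_zero x) hu.ne_zero,
                Polynomial.natDegree_X_sub_C, hw0']
            omega
        set β := q.coeff 1 with hβdef
        set γ := q.coeff 0 with hγdef
        have hqform : q = X^2 + C β * X + C γ := by
          have hR : (X^2 + C β * X + C γ : Polynomial ℝ).natDegree ≤ 2 := by
            compute_degree
          ext k
          match k with
          | 0 => simp [hγdef]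
          | 1 => simp [hβdef, Polynomial.coeff_X_pow]
          | 2 =>
            have h2 : q.coeff 2 = 1 := by
              have := hmon.coeff_natDegree
              rwa [hqdeg] at this
            simp [h2, Polynomial.coeff_X_pow, Polynomial.coeff_C]
          | (k+3) =>
            rw [Polynomial.coeff_eq_zero_of_natDegree_lt (by omega),
              Polynomial.coeff_eq_zero_of_natDegree_lt (by omega)]
        have hqev : ∀ x : ℝ, q.eval x = x^2 + β*x + γ := by
          intro x; rw [hqform]; simp
        have hdisc : β^2 - 4*γ < 0 := by
          by_contra hcon
          push_neg at hcon
          set s := Real.sqrt (β^2 - 4*γ) with hsdef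
          have hs : s^2 = β^2 - 4*γ := Real.sq_sqrt (by linarith)
          apply hqnoroot ((-β + s)/2)
          rw [hqev]
          linear_combination hs/4
        have hγ : 0 < γ := by nlinarith [sq_nonneg β]
        have hβγ : 0 ≤ β + 2*Real.sqrt γ := by
          have h1 : Real.sqrt γ ^2 = γ := Real.sq_sqrt hγ.le
          have h2 : 0 < Real.sqrt γ := Real.sqrt_pos.mpr hγ
          nlinarith
        have hqrep : q = (X - C (Real.sqrt γ))^2
            + X * (C (Real.sqrt (β + 2*Real.sqrt γ)))^2 := by
          apply Polynomial.funext
          intro x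
          have h1 : (Real.sqrt γ)^2 = γ := Real.sq_sqrt hγ.le
          have h2 : (Real.sqrt (β + 2*Real.sqrt γ))^2 = β + 2*Real.sqrt γ :=
            Real.sq_sqrt hβγ
          rw [hqev]
          simp only [Polynomial.eval_add, Polynomial.eval_mul, Polynomial.eval_pow,
            Polynomial.eval_sub, Polynomial.eval_X, Polynomial.eval_C]
          linear_combination (-x) * h2 - h1
        have hqpos : ∀ x : ℝ, 0 < q.eval x := by
          intro x
          rw [hqev]
          nlinarith [sq_nonneg (x + β/2)]
        obtain ⟨w, hw⟩ := hqdvd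
        have hwne : w ≠ 0 := by rintro rfl; rw [mul_zero] at hw; exact hQne hw
        have hdegw : Q.natDegree = 2 + w.natDegree := by
          rw [hw, Polynomial.natDegree_mul hqne hwne, hqdeg]
        have hwnn : ∀ s : ℝ, 0 ≤ s → 0 ≤ w.eval s := by
          intro s hs
          have h2 := hQ s hs
          rw [hw, Polynomial.eval_mul] at h2
          exact (mul_nonneg_iff_of_pos_left (hqpos s)).mp h2
        obtain ⟨f1, g1, hrep⟩ := IH (n-2) (by omega) w (by omega) hwnn
        refine ⟨f1*(X - C (Real.sqrt γ)) + X*(g1*C (Real.sqrt (β + 2*Real.sqrt γ))),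
          f1*C (Real.sqrt (β + 2*Real.sqrt γ)) - g1*(X - C (Real.sqrt γ)), ?_⟩
        rw [hw, hrep, hqrep]; ring


lemma deg_bounds (Q f g : Polynomial ℝ) (h : Q = f^2 + X*g^2) (M : ℕ) (hM : 1 ≤ M)
    (hQ : Q.natDegree ≤ 2*M) : f.natDegree ≤ M ∧ g.natDegree ≤ M - 1 := by
  by_cases hf : f = 0
  · subst hf
    rw [show ((0:Polynomial ℝ)^2 + X*g^2) = X*g^2 by ring] at h
    by_cases hg : g = 0
    · simp [hg]
    · have hd : Q.natDegree = 1 + 2*g.natDegree := by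
        rw [h, Polynomial.natDegree_mul Polynomial.X_ne_zero (pow_ne_zero 2 hg),
          Polynomial.natDegree_X, Polynomial.natDegree_pow]
      exact ⟨by simp, by omega⟩
  · by_cases hg : g = 0
    · subst hg
      rw [show (f^2 + X*(0:Polynomial ℝ)^2) = f^2 by ring] at h
      have hd : Q.natDegree = 2*f.natDegree := by
        rw [h, Polynomial.natDegree_pow]
      exact ⟨by omega, by simp⟩
    · have d1 : (f^2).natDegree = 2*f.natDegree := by rw [Polynomial.natDegree_pow]
      have d2 : (X*g^2 : Polynomial ℝ).natDegree = 1 + 2*g.natDegree := by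
        rw [Polynomial.natDegree_mul Polynomial.X_ne_zero (pow_ne_zero 2 hg),
          Polynomial.natDegree_X, Polynomial.natDegree_pow]
      rcases lt_trichotomy ((f^2).natDegree) ((X*g^2 : Polynomial ℝ).natDegree) with hlt | heq | hgt
      · have := Polynomial.natDegree_add_eq_right_of_natDegree_lt hlt
        rw [← h] at this
        constructor <;> omega
      · omega
      · have := Polynomial.natDegree_add_eq_left_of_natDegree_lt hgt
        rw [← h] at this
        constructor <;> omega

lemma eval_weighted (f : Polynomial ℝ) (k : ℕ) (hf : f.natDegree ≤ k) (A B : Polynomial ℝ)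
    (x : ℝ) (hB : B.eval x ≠ 0) :
    (∑ i ∈ Finset.range (k+1), C (f.coeff i) * A^i * B^(k-i)).eval x
      = (B.eval x)^k * f.eval (A.eval x / B.eval x) := by
  rw [Polynomial.eval_finset_sum, Polynomial.eval_eq_sum_range' (Nat.lt_succ_of_le hf),
    Finset.mul_sum]
  apply Finset.sum_congr rfl
  intro i hi
  simp only [Finset.mem_range] at hi
  simp only [Polynomial.eval_mul, Polynomial.eval_pow, Polynomial.eval_C]
  rw [div_pow, show k = i + (k - i) by omega, pow_add]
  rw [Nat.add_sub_cancel_left]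
  field_simp

theorem lukacs_even (a b : ℝ) (hab : a < b) (d : Polynomial ℝ)
    (h : ∀ x ∈ Set.Icc a b, 0 ≤ d.eval x) :
    ∃ p q : Polynomial ℝ, d = p^2 + ((C b - X) * (X - C a)) * q^2 := by
  have hbane : (b - a : ℝ) ≠ 0 := sub_ne_zero.mpr hab.ne'
  obtain ⟨N, hMd⟩ : ∃ N : ℕ, d.natDegree ≤ 2*(N+1) := ⟨d.natDegree, by omega⟩
  set QQ : Polynomial ℝ := ∑ i ∈ Finset.range (2*(N+1)+1),
    C (d.coeff i) * (C a + C b * X)^i * (1 + X)^(2*(N+1) - i) with hQQ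
  have hQQev : ∀ s : ℝ, (1:ℝ) + s ≠ 0 →
      QQ.eval s = (1+s)^(2*(N+1)) * d.eval ((a + b*s)/(1+s)) := by
    intro s hs
    have h2 : ((1:Polynomial ℝ) + X).eval s = 1 + s := by simp
    have h3 : ((C a + C b * X : Polynomial ℝ)).eval s = a + b*s := by simp
    rw [hQQ, eval_weighted d (2*(N+1)) hMd _ _ s (by simpa using hs), h2, h3]
  have hQQdeg : QQ.natDegree ≤ 2*(N+1) := by
    rw [hQQ]
    apply Polynomial.natDegree_sum_le_of_forall_le
    intro i hi
    simp only [Finset.mem_range] at hi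
    have e1 : ((C a + C b * X : Polynomial ℝ)^i).natDegree ≤ i := by
      refine le_trans (Polynomial.natDegree_pow_le) ?_
      have : ((C a + C b * X : Polynomial ℝ)).natDegree ≤ 1 := by compute_degree
      calc i * (C a + C b * X : Polynomial ℝ).natDegree ≤ i * 1 :=
            Nat.mul_le_mul_left i this
        _ = i := by omega
    have e2 : (((1:Polynomial ℝ) + X)^(2*(N+1)-i)).natDegree ≤ 2*(N+1) - i := by
      refine le_trans (Polynomial.natDegree_pow_le) ?_
      have : ((1:Polynomial ℝ) + X).natDegree ≤ 1 := by compute_degree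
      calc (2*(N+1)-i) * ((1:Polynomial ℝ) + X).natDegree ≤ (2*(N+1)-i) * 1 :=
            Nat.mul_le_mul_left _ this
        _ = 2*(N+1) - i := by omega
    calc (C (d.coeff i) * (C a + C b * X)^i * (1 + X)^(2*(N+1)-i)).natDegree
        ≤ (C (d.coeff i) * (C a + C b * X)^i).natDegree
            + (((1:Polynomial ℝ) + X)^(2*(N+1)-i)).natDegree := Polynomial.natDegree_mul_le
      _ ≤ ((C (d.coeff i)).natDegree + ((C a + C b * X : Polynomial ℝ)^i).natDegree)
            + (2*(N+1) - i) := Nat.add_le_add Polynomial.natDegree_mul_le e2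
      _ ≤ (0 + i) + (2*(N+1) - i) := Nat.add_le_add_right
            (Nat.add_le_add (le_of_eq (Polynomial.natDegree_C _)) e1) _
      _ ≤ 2*(N+1) := by omega
  have hQQnn : ∀ s : ℝ, 0 ≤ s → 0 ≤ QQ.eval s := by
    intro s hs
    have h1 : (0:ℝ) < 1 + s := by linarith
    rw [hQQev s h1.ne']
    apply mul_nonneg (by positivity)
    apply h
    constructor
    · rw [le_div_iff₀ h1]; nlinarith
    · rw [div_le_iff₀ h1]; nlinarith
  obtain ⟨f, g, hrep⟩ := halfline_rep QQ.natDegree QQ le_rfl hQQnn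
  obtain ⟨hfdeg, hgdeg'⟩ := deg_bounds QQ f g hrep (N+1) (by omega) hQQdeg
  have hgdeg : g.natDegree ≤ N := by omega
  set P : Polynomial ℝ := ∑ i ∈ Finset.range ((N+1)+1),
    C (f.coeff i) * (X - C a)^i * (C b - X)^((N+1) - i) with hP
  set R : Polynomial ℝ := ∑ i ∈ Finset.range (N+1),
    C (g.coeff i) * (X - C a)^i * (C b - X)^(N - i) with hR
  have hPev : ∀ x : ℝ, x ≠ b → P.eval x = (b-x)^(N+1) * f.eval ((x-a)/(b-x)) := by
    intro x hx
    have hbx : (b - x : ℝ) ≠ 0 := sub_ne_zero.mpr (Ne.symm hx)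
    have h2 : ((C b - X : Polynomial ℝ)).eval x = b - x := by simp
    have h3 : ((X - C a : Polynomial ℝ)).eval x = x - a := by simp
    rw [hP, eval_weighted f (N+1) hfdeg _ _ x (by simpa using hbx), h2, h3]
  have hRev : ∀ x : ℝ, x ≠ b → R.eval x = (b-x)^N * g.eval ((x-a)/(b-x)) := by
    intro x hx
    have hbx : (b - x : ℝ) ≠ 0 := sub_ne_zero.mpr (Ne.symm hx)
    have h2 : ((C b - X : Polynomial ℝ)).eval x = b - x := by simp
    have h3 : ((X - C a : Polynomial ℝ)).eval x = x - a := by simp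
    rw [hR, eval_weighted g N hgdeg _ _ x (by simpa using hbx), h2, h3]
  have hident : C ((b-a)^(2*(N+1))) * d = P^2 + ((C b - X)*(X - C a)) * R^2 := by
    apply Polynomial.eq_of_infinite_eval_eq
    refine Set.Infinite.mono ?_ (Set.Finite.infinite_compl (Set.finite_singleton b))
    intro x hx
    have hxb : x ≠ b := hx
    have hbx : (b - x : ℝ) ≠ 0 := sub_ne_zero.mpr (Ne.symm hxb)
    set s : ℝ := (x-a)/(b-x) with hsd
    have h1s : 1 + s = (b-a)/(b-x) := by rw [hsd]; field_simp; ring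
    have h1sne : (1:ℝ) + s ≠ 0 := by rw [h1s]; exact div_ne_zero hbane hbx
    have hxs : (a + b*s)/(1+s) = x := by
      rw [h1s, hsd]; field_simp; try ring
    have e1 : QQ.eval s = (1+s)^(2*(N+1)) * d.eval x := by rw [hQQev s h1sne, hxs]
    have e2 : QQ.eval s = (f.eval s)^2 + s*(g.eval s)^2 := by rw [hrep]; simp
    have key : (b-a)^(2*(N+1)) * d.eval x
        = (b-x)^(2*(N+1)) * ((f.eval s)^2 + s*(g.eval s)^2) := by
      rw [← e2, e1, h1s, div_pow]
      have hp1 : ((b-x)^(2*(N+1)) : ℝ) ≠ 0 := pow_ne_zero _ hbx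
      field_simp
      try ring
    have hsb : s * (b-x) = x - a := by rw [hsd]; field_simp
    simp only [Set.mem_setOf_eq, Polynomial.eval_mul, Polynomial.eval_add,
      Polynomial.eval_pow, Polynomial.eval_sub, Polynomial.eval_X, Polynomial.eval_C]
    rw [hPev x hxb, hRev x hxb, key]
    have hpw1 : ((b-x)^(N+1))^2 = (b-x)^(2*(N+1)) := by
      rw [← pow_mul]; congr 1; omega
    have hpw2 : (b-x)^(2*(N+1)) = (b-x)^(2*N)*((b-x)*(b-x)) := by
      rw [show 2*(N+1) = 2*N+2 from by omega, pow_add]; ring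
    have hpw3 : ((b-x)^N)^2 = (b-x)^(2*N) := by rw [← pow_mul]; congr 1; omega
    rw [mul_pow, mul_pow, hpw1, hpw2, hpw3]
    linear_combination ((b-x)^(2*N)*(b-x)*(g.eval s)^2) * hsb
  set ε : ℝ := ((b-a)^(N+1))⁻¹ with hε
  have hC : (C ε)^2 * C ((b-a)^(2*(N+1))) = 1 := by
    rw [← Polynomial.C_pow, ← Polynomial.C_mul,
      show ε^2 * (b-a)^(2*(N+1)) = 1 from by
        rw [hε, show 2*(N+1) = (N+1)*2 from by ring, pow_mul]
        field_simp]
    simp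
  refine ⟨C ε * P, C ε * R, ?_⟩
  linear_combination (C ε)^2 * hident - d * hC

theorem diag_psd_on_interval_iff (m : ℕ) (a b : ℝ) (hab : a < b)
    (d : Fin m → Polynomial ℝ) :
    (∀ x : ℝ, x ∈ Set.Icc a b → ∀ u : Fin m → ℝ,
        0 ≤ u ⬝ᵥ ((Matrix.diagonal d).map (fun p => p.eval x)).mulVec u) ↔
    (∃ a1 a2 a3 a4 : Fin m → Polynomial ℝ,
        Matrix.diagonal d =
          ((X : Polynomial ℝ) - C a) • ((Matrix.diagonal a1)ᵀ * Matrix.diagonal a1) +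
          (C b - (X : Polynomial ℝ)) • ((Matrix.diagonal a2)ᵀ * Matrix.diagonal a2) +
          (Matrix.diagonal a3)ᵀ * Matrix.diagonal a3 +
          ((C b - (X : Polynomial ℝ)) * ((X : Polynomial ℝ) - C a)) •
            ((Matrix.diagonal a4)ᵀ * Matrix.diagonal a4)) := by
  have hmap : ∀ x : ℝ, ((Matrix.diagonal d).map (fun p => p.eval x))
      = Matrix.diagonal (fun i => (d i).eval x) := by
    intro x
    rw [Matrix.diagonal_map (by simp)]
  constructor
  · intro h
    have hscal : ∀ i : Fin m, ∀ x ∈ Set.Icc a b, 0 ≤ (d i).eval x := by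
      intro i x hx
      have := h x hx (Pi.single i 1)
      rw [hmap x] at this
      simpa [single_dotProduct, Matrix.mulVec_diagonal] using this
    choose p q hpq using fun i => lukacs_even a b hab (d i) (hscal i)
    refine ⟨0, 0, p, q, ?_⟩
    have hz : (Matrix.diagonal (0 : Fin m → Polynomial ℝ)) = 0 := Matrix.diagonal_zero
    rw [hz]
    simp only [Matrix.transpose_zero, Matrix.mul_zero, Matrix.zero_mul, smul_zero,
      zero_add, Matrix.diagonal_transpose, Matrix.diagonal_mul_diagonal]
    rw [← Matrix.diagonal_smul, Matrix.diagonal_add]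
    apply congrArg Matrix.diagonal
    funext i
    simp only [Pi.add_apply, Pi.smul_apply, smul_eq_mul]
    rw [hpq i]; ring
  · rintro ⟨a1, a2, a3, a4, hrep⟩ x hx u
    have hent : ∀ i : Fin m, d i = (X - C a) * (a1 i * a1 i)
        + (C b - X) * (a2 i * a2 i) + a3 i * a3 i
        + ((C b - X) * (X - C a)) * (a4 i * a4 i) := by
      intro i
      have := congrFun (congrFun hrep i) i
      simpa [Matrix.diagonal_transpose, Matrix.diagonal_mul_diagonal,
        Matrix.add_apply, Matrix.smul_apply, Matrix.diagonal_apply_eq,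
        smul_eq_mul] using this
    have hev : ∀ i : Fin m, 0 ≤ (d i).eval x := by
      intro i
      rw [hent i]
      simp only [Polynomial.eval_add, Polynomial.eval_mul, Polynomial.eval_sub,
        Polynomial.eval_X, Polynomial.eval_C]
      obtain ⟨hax, hxb⟩ := hx
      have t1 : 0 ≤ (x-a) * ((a1 i).eval x * (a1 i).eval x) :=
        mul_nonneg (by linarith) (mul_self_nonneg _)
      have t2 : 0 ≤ (b-x) * ((a2 i).eval x * (a2 i).eval x) :=
        mul_nonneg (by linarith) (mul_self_nonneg _)
      have t3 : 0 ≤ (a3 i).eval x * (a3 i).eval x := mul_self_nonneg _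
      have t4 : 0 ≤ (b-x) * (x-a) * ((a4 i).eval x * (a4 i).eval x) :=
        mul_nonneg (mul_nonneg (by linarith) (by linarith)) (mul_self_nonneg _)
      linarith
    rw [hmap x]
    rw [dotProduct]
    apply Finset.sum_nonneg
    intro i _
    rw [Matrix.mulVec_diagonal]
    nlinarith [hev i, sq_nonneg (u i)]
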